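/- Let P(λ) = [[A(λ), B(λ)], [-C(λ), D(λ)]] be a polynomial system matrix with transfer function G(λ). Suppose A(λ) and C(λ) are right coprime and A(λ)^{-1}B(λ) is a proper rational matrix. If [H_1(λ); H_2(λ)] is a right minimal basis of P(λ), then H_2(λ) is a right minimal basis of G(λ), H_1(λ) = -A(λ)^{-1}B(λ)H_2(λ), and the right minimal indices of P(λ) and G(λ) coincide. -/
import Mathlib


open Polynomial Matrix

noncomputable section

variable {F : Type*} [Field F]

/-- The natural embedding of a polynomial matrix into the rational functions. -/
def toRF {a b : Type*} (M : Matrix a b (Polynomial F)) : Matrix a b (RatFunc F) :=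
  M.map (algebraMap (Polynomial F) (RatFunc F))

/-- A rational function is proper if the degree of its numerator is at most that of its
denominator. -/
def IsProperRat (r : RatFunc F) : Prop := r.num.degree ≤ r.denom.degree

/-- Degree (as a natural number) of the `j`-th column of a polynomial matrix. -/
def colDegNat {a : Type*} [Fintype a] {l : ℕ} (N : Matrix a (Fin l) (Polynomial F))
    (j : Fin l) : ℕ :=
  Finset.univ.sup fun i => (N i j).natDegree

/-- The order of a polynomial matrix: the sum of its column degrees. -/
def matOrder {a : Type*} [Fintype a] {l : ℕ} (N : Matrix a (Fin l) (Polynomial F)) : ℕ :=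
  ∑ j, colDegNat N j

/-- The multiset of column degrees of a polynomial matrix. -/
def colDegs {a : Type*} [Fintype a] {l : ℕ} (N : Matrix a (Fin l) (Polynomial F)) : Multiset ℕ :=
  Finset.univ.val.map fun j => colDegNat N j

/-- The columns of the polynomial matrix `N`, regarded as rational vectors, form a basis of
the right null-space of the rational matrix `M`. -/
def IsRightPolyBasis {a b : Type*} [Fintype a] [Fintype b] {l : ℕ}
    (M : Matrix a b (RatFunc F)) (N : Matrix b (Fin l) (Polynomial F)) : Prop :=
  LinearIndependent (RatFunc F) (fun j : Fin l => (toRF N)ᵀ j) ∧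
    Submodule.span (RatFunc F) (Set.range fun j : Fin l => (toRF N)ᵀ j) =
      LinearMap.ker M.mulVecLin

/-- The columns of the polynomial matrix `N` form a basis of the left null-space of `M`. -/
def IsLeftPolyBasis {a b : Type*} [Fintype a] [Fintype b] {l : ℕ}
    (M : Matrix a b (RatFunc F)) (N : Matrix a (Fin l) (Polynomial F)) : Prop :=
  LinearIndependent (RatFunc F) (fun j : Fin l => (toRF N)ᵀ j) ∧
    Submodule.span (RatFunc F) (Set.range fun j : Fin l => (toRF N)ᵀ j) =
      LinearMap.ker M.vecMulLinear

/-- A right minimal basis: a right polynomial basis of least order. -/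
def IsRightMinimalBasis {a b : Type*} [Fintype a] [Fintype b] {l : ℕ}
    (M : Matrix a b (RatFunc F)) (N : Matrix b (Fin l) (Polynomial F)) : Prop :=
  IsRightPolyBasis M N ∧
    ∀ (l' : ℕ) (N' : Matrix b (Fin l') (Polynomial F)), IsRightPolyBasis M N' →
      matOrder N ≤ matOrder N'

/-- A left minimal basis: a left polynomial basis of least order. -/
def IsLeftMinimalBasis {a b : Type*} [Fintype a] [Fintype b] {l : ℕ}
    (M : Matrix a b (RatFunc F)) (N : Matrix a (Fin l) (Polynomial F)) : Prop :=
  IsLeftPolyBasis M N ∧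
    ∀ (l' : ℕ) (N' : Matrix a (Fin l') (Polynomial F)), IsLeftPolyBasis M N' →
      matOrder N ≤ matOrder N'

/-- `s` is the multiset of right minimal indices of `M`. -/
def HasRightMinimalIndices {a b : Type*} [Fintype a] [Fintype b]
    (M : Matrix a b (RatFunc F)) (s : Multiset ℕ) : Prop :=
  ∃ (l : ℕ) (N : Matrix b (Fin l) (Polynomial F)), IsRightMinimalBasis M N ∧ colDegs N = s

/-- `s` is the multiset of left minimal indices of `M`. -/
def HasLeftMinimalIndices {a b : Type*} [Fintype a] [Fintype b]
    (M : Matrix a b (RatFunc F)) (s : Multiset ℕ) : Prop :=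
  ∃ (l : ℕ) (N : Matrix a (Fin l) (Polynomial F)), IsLeftMinimalBasis M N ∧ colDegs N = s

lemma toRF_mul {a b c : Type*} [Fintype b] (M : Matrix a b (Polynomial F))
    (N : Matrix b c (Polynomial F)) : toRF (M * N) = toRF M * toRF N := by
  ext i j
  simp [toRF, Matrix.mul_apply, map_sum]

lemma toRF_add {a b : Type*} (M N : Matrix a b (Polynomial F)) :
    toRF (M + N) = toRF M + toRF N := by
  ext i j; simp [toRF]

lemma toRF_sub {a b : Type*} (M N : Matrix a b (Polynomial F)) :
    toRF (M - N) = toRF M - toRF N := by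
  ext i j; simp [toRF]

lemma toRF_neg {a b : Type*} (M : Matrix a b (Polynomial F)) :
    toRF (-M) = -(toRF M) := by
  ext i j; simp [toRF]

lemma toRF_one {a : Type*} [Fintype a] [DecidableEq a] :
    toRF (1 : Matrix a a (Polynomial F)) = 1 := by
  ext i j
  by_cases h : i = j <;> simp [toRF, Matrix.one_apply, h]

lemma intDegree_sum_le {ι : Type*} (s : Finset ι) (t : ι → RatFunc F) (d : ℤ)
    (h : ∀ k ∈ s, t k = 0 ∨ (t k).intDegree ≤ d) (hs : (∑ k ∈ s, t k) ≠ 0) :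
    (∑ k ∈ s, t k).intDegree ≤ d := by
  induction s using Finset.cons_induction with
  | empty => simp at hs
  | cons a s ha ih =>
    rw [Finset.sum_cons] at hs ⊢
    by_cases h2 : ∑ k ∈ s, t k = 0
    · rw [h2, add_zero] at hs ⊢
      exact (h a (Finset.mem_cons_self _ _)).resolve_left hs
    · have hrec := ih (fun k hk => h k (Finset.mem_cons_of_mem hk)) h2
      rcases h a (Finset.mem_cons_self _ _) with h0 | h0
      · rw [h0, zero_add] at hs ⊢; exact hrec
      · exact le_trans (RatFunc.intDegree_add_le h2 hs) (max_le h0 hrec)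

lemma proper_intDegree {r : RatFunc F} (h : IsProperRat r) : r = 0 ∨ r.intDegree ≤ 0 := by
  by_cases hr : r = 0
  · exact Or.inl hr
  · right
    have h1 : r.num.natDegree ≤ r.denom.natDegree := Polynomial.natDegree_le_natDegree h
    simp only [RatFunc.intDegree, sub_nonpos]
    exact_mod_cast h1

lemma mul_apply_mulVec {a b : Type*} [Fintype b] {l : ℕ} (M : Matrix a b (RatFunc F))
    (N : Matrix b (Fin l) (RatFunc F)) (i : a) (j : Fin l) :
    (M * N) i j = (M *ᵥ Nᵀ j) i := by
  simp [Matrix.mul_apply, Matrix.mulVec, dotProduct]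

lemma natDegree_entry_le {a b : Type*} [Fintype a] [Fintype b] {l : ℕ}
    (R : Matrix a b (RatFunc F)) (hR : ∀ i j, R i j = 0 ∨ (R i j).intDegree ≤ 0)
    (K₁ : Matrix a (Fin l) (Polynomial F)) (N : Matrix b (Fin l) (Polynomial F))
    (hK : toRF K₁ = R * toRF N) (i : a) (j : Fin l) :
    (K₁ i j).natDegree ≤ colDegNat N j := by
  by_cases h0 : K₁ i j = 0
  · simp [h0]
  have hne : algebraMap (Polynomial F) (RatFunc F) (K₁ i j) ≠ 0 := fun h =>
    h0 (RatFunc.algebraMap_injective F (by rw [h, map_zero]))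
  have heq : algebraMap (Polynomial F) (RatFunc F) (K₁ i j)
      = ∑ k, R i k * algebraMap (Polynomial F) (RatFunc F) (N k j) := by
    have h := congrFun (congrFun hK i) j
    simpa [toRF, Matrix.mul_apply] using h
  have hb : (algebraMap (Polynomial F) (RatFunc F) (K₁ i j)).intDegree ≤ (colDegNat N j : ℤ) := by
    rw [heq]
    refine intDegree_sum_le _ _ _ (fun k _ => ?_) (heq ▸ hne)
    by_cases hRk : R i k = 0
    · left; simp [hRk]
    by_cases hNk : N k j = 0
    · left; simp [hNk]
    right
    have hNk' : algebraMap (Polynomial F) (RatFunc F) (N k j) ≠ 0 := fun h =>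
      hNk (RatFunc.algebraMap_injective F (by rw [h, map_zero]))
    rw [RatFunc.intDegree_mul hRk hNk', RatFunc.intDegree_polynomial]
    have h1 := (hR i k).resolve_left hRk
    have h2 : (N k j).natDegree ≤ colDegNat N j :=
      Finset.le_sup (f := fun i => (N i j).natDegree) (Finset.mem_univ k)
    omega
  rw [RatFunc.intDegree_polynomial] at hb
  exact_mod_cast hb

lemma toRF_det_isUnit {n : ℕ} (A : Matrix (Fin n) (Fin n) (Polynomial F)) (hA : A.det ≠ 0) :
    IsUnit (toRF A).det := by
  have hdet : (toRF A).det = algebraMap (Polynomial F) (RatFunc F) A.det := by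
    rw [RingHom.map_det]; rfl
  rw [hdet, isUnit_iff_ne_zero]
  intro h
  exact hA (RatFunc.algebraMap_injective F (by rw [h, map_zero]))

lemma mem_kerP_iff {n p m : ℕ}
    (A : Matrix (Fin n) (Fin n) (Polynomial F))
    (B : Matrix (Fin n) (Fin m) (Polynomial F))
    (C : Matrix (Fin p) (Fin n) (Polynomial F))
    (D : Matrix (Fin p) (Fin m) (Polynomial F))
    (hA : A.det ≠ 0)
    (G : Matrix (Fin p) (Fin m) (RatFunc F))
    (hG : G = toRF D + toRF C * (toRF A)⁻¹ * toRF B)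
    (P : Matrix (Fin n ⊕ Fin p) (Fin n ⊕ Fin m) (RatFunc F))
    (hP : P = toRF (Matrix.fromBlocks A B (-C) D))
    (v : Fin n ⊕ Fin m → RatFunc F) :
    P *ᵥ v = 0 ↔
      (G *ᵥ (v ∘ Sum.inr) = 0 ∧
        v ∘ Sum.inl = -(((toRF A)⁻¹ * toRF B) *ᵥ (v ∘ Sum.inr))) := by
  have hu : IsUnit (toRF A).det := toRF_det_isUnit A hA
  have h1 : (toRF A)⁻¹ * toRF A = 1 := Matrix.nonsing_inv_mul _ hu
  have h2 : toRF A * (toRF A)⁻¹ = 1 := Matrix.mul_nonsing_inv _ hu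
  have hPb : P = Matrix.fromBlocks (toRF A) (toRF B) (-(toRF C)) (toRF D) := by
    rw [hP]
    have h3 : toRF (Matrix.fromBlocks A B (-C) D)
        = Matrix.fromBlocks (toRF A) (toRF B) (toRF (-C)) (toRF D) :=
      Matrix.fromBlocks_map A B (-C) D _
    rw [h3, toRF_neg]
  rw [hPb, Matrix.fromBlocks_mulVec]
  set x := v ∘ Sum.inl with hxdef
  set y := v ∘ Sum.inr with hydef
  constructor
  · intro h
    have hL : toRF A *ᵥ x + toRF B *ᵥ y = 0 := funext fun i => congrFun h (Sum.inl i)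
    have hR : (-(toRF C)) *ᵥ x + toRF D *ᵥ y = 0 := funext fun i => congrFun h (Sum.inr i)
    have hAx : toRF A *ᵥ x = -(toRF B *ᵥ y) := eq_neg_of_add_eq_zero_left hL
    have hx : x = -(((toRF A)⁻¹ * toRF B) *ᵥ y) := by
      calc x = ((toRF A)⁻¹ * toRF A) *ᵥ x := by rw [h1, Matrix.one_mulVec]
        _ = (toRF A)⁻¹ *ᵥ (toRF A *ᵥ x) := (Matrix.mulVec_mulVec x _ _).symm
        _ = (toRF A)⁻¹ *ᵥ (-(toRF B *ᵥ y)) := by rw [hAx]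
        _ = -(((toRF A)⁻¹ * toRF B) *ᵥ y) := by
            rw [Matrix.mulVec_neg, Matrix.mulVec_mulVec]
    refine ⟨?_, hx⟩
    have h' : -(toRF C *ᵥ x) + toRF D *ᵥ y = 0 := by rwa [Matrix.neg_mulVec] at hR
    have hCx : toRF C *ᵥ x = toRF D *ᵥ y :=
      (eq_of_sub_eq_zero (by rw [sub_eq_add_neg, add_comm]; exact h')).symm
    rw [hG, Matrix.add_mulVec]
    have h4 : (toRF C * (toRF A)⁻¹ * toRF B) *ᵥ y
        = toRF C *ᵥ (((toRF A)⁻¹ * toRF B) *ᵥ y) := by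
      rw [Matrix.mulVec_mulVec, ← Matrix.mul_assoc]
    have h5 : ((toRF A)⁻¹ * toRF B) *ᵥ y = -x := by rw [hx, neg_neg]
    rw [h4, h5, Matrix.mulVec_neg, hCx]
    simp
  · rintro ⟨hGy, hx⟩
    have hblock1 : toRF A *ᵥ x + toRF B *ᵥ y = 0 := by
      rw [hx, Matrix.mulVec_neg, Matrix.mulVec_mulVec, ← Matrix.mul_assoc, h2, Matrix.one_mul]
      exact neg_add_cancel _
    have hblock2 : (-(toRF C)) *ᵥ x + toRF D *ᵥ y = 0 := by
      rw [Matrix.neg_mulVec, hx, Matrix.mulVec_neg, neg_neg, Matrix.mulVec_mulVec,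
        ← Matrix.mul_assoc]
      have h6 := hGy
      rw [hG, Matrix.add_mulVec] at h6
      rw [add_comm]; exact h6
    funext i
    cases i with
    | inl i => exact congrFun hblock1 i
    | inr i => exact congrFun hblock2 i

lemma aux_main {n p m l : ℕ}
    (A : Matrix (Fin n) (Fin n) (Polynomial F))
    (B : Matrix (Fin n) (Fin m) (Polynomial F))
    (C : Matrix (Fin p) (Fin n) (Polynomial F))
    (D : Matrix (Fin p) (Fin m) (Polynomial F))
    (hA : A.det ≠ 0)
    (hcoprime : ∃ (X : Matrix (Fin n) (Fin n) (Polynomial F))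
        (Y : Matrix (Fin n) (Fin p) (Polynomial F)), X * A + Y * C = 1)
    (hproper : ∀ i j, IsProperRat (((toRF A)⁻¹ * toRF B) i j))
    (G : Matrix (Fin p) (Fin m) (RatFunc F))
    (hG : G = toRF D + toRF C * (toRF A)⁻¹ * toRF B)
    (P : Matrix (Fin n ⊕ Fin p) (Fin n ⊕ Fin m) (RatFunc F))
    (hP : P = toRF (Matrix.fromBlocks A B (-C) D))
    (H₁ : Matrix (Fin n) (Fin l) (Polynomial F))
    (H₂ : Matrix (Fin m) (Fin l) (Polynomial F))
    (hmin : IsRightMinimalBasis P (Matrix.fromRows H₁ H₂)) :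
    IsRightMinimalBasis G H₂ ∧
    toRF H₁ = -((toRF A)⁻¹ * toRF B * toRF H₂) ∧
    colDegs (Matrix.fromRows H₁ H₂) = colDegs H₂ ∧
    (∀ {l' : ℕ} (N' : Matrix (Fin m) (Fin l') (Polynomial F)), IsRightMinimalBasis G N' →
      ∃ K₁ : Matrix (Fin n) (Fin l') (Polynomial F),
        IsRightMinimalBasis P (Matrix.fromRows K₁ N') ∧
        colDegs (Matrix.fromRows K₁ N') = colDegs N') := by
  classical
  set R : Matrix (Fin n) (Fin m) (RatFunc F) := (toRF A)⁻¹ * toRF B with hRdef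
  have hu : IsUnit (toRF A).det := toRF_det_isUnit A hA
  have h2 : toRF A * (toRF A)⁻¹ = 1 := Matrix.mul_nonsing_inv _ hu
  -- the embedding ι and projection π between the null spaces
  set ι : (Fin m → RatFunc F) →ₗ[RatFunc F] (Fin n ⊕ Fin m → RatFunc F) :=
    (Matrix.fromRows (-R) (1 : Matrix (Fin m) (Fin m) (RatFunc F))).mulVecLin with hιdef
  have hι : ∀ y, ι y = Sum.elim (-(R *ᵥ y)) y := by
    intro y
    rw [hιdef]
    rw [Matrix.mulVecLin_apply, Matrix.fromRows_mulVec, Matrix.neg_mulVec, Matrix.one_mulVec]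
  set π : (Fin n ⊕ Fin m → RatFunc F) →ₗ[RatFunc F] (Fin m → RatFunc F) :=
    LinearMap.funLeft _ _ Sum.inr with hπdef
  have hπ : ∀ v, π v = v ∘ Sum.inr := fun v => rfl
  have hπι : ∀ y, π (ι y) = y := by
    intro y
    rw [hπ, hι]
    funext i; rfl
  have hker : ∀ v : Fin n ⊕ Fin m → RatFunc F,
      v ∈ LinearMap.ker P.mulVecLin ↔ (π v ∈ LinearMap.ker G.mulVecLin ∧ v = ι (π v)) := by
    intro v
    rw [LinearMap.mem_ker, LinearMap.mem_ker, Matrix.mulVecLin_apply, Matrix.mulVecLin_apply,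
      mem_kerP_iff A B C D hA G hG P hP v]
    constructor
    · rintro ⟨hh1, hh2⟩
      refine ⟨hh1, ?_⟩
      rw [hι]
      funext i
      cases i with
      | inl i => exact congrFun hh2 i
      | inr i => rfl
    · rintro ⟨hh1, hh2⟩
      refine ⟨hh1, ?_⟩
      conv_lhs => rw [hh2, hι]
      funext i
      rfl
  have hmap : Submodule.map ι (LinearMap.ker G.mulVecLin) = LinearMap.ker P.mulVecLin := by
    apply le_antisymm
    · rintro _ ⟨y, hy, rfl⟩
      rw [hker]
      exact ⟨by rwa [hπι], by rw [hπι]⟩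
    · intro v hv
      rw [hker] at hv
      exact ⟨π v, hv.1, hv.2.symm⟩
  have hmapπ : Submodule.map π (LinearMap.ker P.mulVecLin) = LinearMap.ker G.mulVecLin := by
    apply le_antisymm
    · rintro _ ⟨v, hv, rfl⟩
      exact ((hker v).1 hv).1
    · intro y hy
      exact ⟨ι y, (hker (ι y)).2 ⟨by rwa [hπι], by rw [hπι]⟩, hπι y⟩
  have hcols : ∀ {l₀ : ℕ} (X : Matrix (Fin n) (Fin l₀) (Polynomial F))
      (Y : Matrix (Fin m) (Fin l₀) (Polynomial F)) (j : Fin l₀),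
      (toRF (Matrix.fromRows X Y))ᵀ j = Sum.elim ((toRF X)ᵀ j) ((toRF Y)ᵀ j) := by
    intro l₀ X Y j
    funext i
    cases i with
    | inl i => rfl
    | inr i => rfl
  -- degree comparison
  have hdeg : ∀ {l₀ : ℕ} (X : Matrix (Fin n) (Fin l₀) (Polynomial F))
      (Y : Matrix (Fin m) (Fin l₀) (Polynomial F)),
      toRF X = -(R * toRF Y) → ∀ j, colDegNat (Matrix.fromRows X Y) j = colDegNat Y j := by
    intro l₀ X Y hXY j
    have hb : ∀ i, (X i j).natDegree ≤ colDegNat Y j := by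
      intro i
      refine natDegree_entry_le (-R) (fun i' j' => ?_) X Y ?_ i j
      · rcases proper_intDegree (hproper i' j') with h | h
        · left
          rw [Matrix.neg_apply]
          rw [hRdef] at h ⊢
          rw [h, neg_zero]
        · right
          rw [Matrix.neg_apply, RatFunc.intDegree_neg]
          exact h
      · rw [hXY, Matrix.neg_mul]
    apply le_antisymm
    · apply Finset.sup_le
      intro i _
      cases i with
      | inl i => exact hb i
      | inr i => exact Finset.le_sup (f := fun i' => (Y i' j).natDegree) (Finset.mem_univ i)
    · apply Finset.sup_le
      intro i _
      exact Finset.le_sup (f := fun i' => ((Matrix.fromRows X Y) i' j).natDegree)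
        (Finset.mem_univ (Sum.inr i))
  -- part 1 : extraction of a basis of the kernel of G from one of P
  have hpart1 : ∀ {l₀ : ℕ} (H₁' : Matrix (Fin n) (Fin l₀) (Polynomial F))
      (H₂' : Matrix (Fin m) (Fin l₀) (Polynomial F)),
      IsRightPolyBasis P (Matrix.fromRows H₁' H₂') →
      toRF H₁' = -(R * toRF H₂') ∧ IsRightPolyBasis G H₂' := by
    intro l₀ H₁' H₂' hpb
    have hcolker : ∀ j, (toRF (Matrix.fromRows H₁' H₂'))ᵀ j ∈ LinearMap.ker P.mulVecLin := by
      intro j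
      rw [← hpb.2]
      exact Submodule.subset_span ⟨j, rfl⟩
    have hc2 : ∀ j, π ((toRF (Matrix.fromRows H₁' H₂'))ᵀ j) = (toRF H₂')ᵀ j := by
      intro j
      rw [hπ, hcols]
      funext i; rfl
    have hcι : ∀ j, (toRF (Matrix.fromRows H₁' H₂'))ᵀ j = ι ((toRF H₂')ᵀ j) := by
      intro j
      have h := (hker _).1 (hcolker j)
      rw [h.2, hc2 j]
    have hH1 : toRF H₁' = -(R * toRF H₂') := by
      ext i j
      have h := congrFun (hcι j) (Sum.inl i)
      rw [hι] at h
      calc toRF H₁' i j = (-(R *ᵥ (toRF H₂')ᵀ j)) i := h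
        _ = -((R * toRF H₂') i j) := by rw [Pi.neg_apply, mul_apply_mulVec]
        _ = (-(R * toRF H₂')) i j := rfl
    refine ⟨hH1, ?_, ?_⟩
    · have heq : (fun j => (toRF (Matrix.fromRows H₁' H₂'))ᵀ j)
          = ι ∘ (fun j => (toRF H₂')ᵀ j) := funext fun j => hcι j
      exact LinearIndependent.of_comp ι (by rw [← heq]; exact hpb.1)
    · have hrange : (Set.range fun j => (toRF H₂')ᵀ j)
          = π '' (Set.range fun j => (toRF (Matrix.fromRows H₁' H₂'))ᵀ j) := by
        rw [← Set.range_comp]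
        exact congrArg _ (funext fun j => (hc2 j).symm)
      rw [hrange, ← Submodule.map_span, hpb.2, hmapπ]
  -- part 2 : lifting a basis of the kernel of G to one of P
  obtain ⟨X, Y, hXY⟩ := hcoprime
  have hXY' : toRF X * toRF A + toRF Y * toRF C = 1 := by
    rw [← toRF_mul, ← toRF_mul, ← toRF_add, hXY, toRF_one]
  have hpart2 : ∀ {l₀ : ℕ} (N' : Matrix (Fin m) (Fin l₀) (Polynomial F)),
      IsRightPolyBasis G N' →
      ∃ K₁ : Matrix (Fin n) (Fin l₀) (Polynomial F),
        IsRightPolyBasis P (Matrix.fromRows K₁ N') ∧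
        matOrder (Matrix.fromRows K₁ N') = matOrder N' ∧
        colDegs (Matrix.fromRows K₁ N') = colDegs N' := by
    intro l₀ N' hN'
    have hkerN : ∀ j, (toRF N')ᵀ j ∈ LinearMap.ker G.mulVecLin := by
      intro j
      rw [← hN'.2]
      exact Submodule.subset_span ⟨j, rfl⟩
    have hGN : G * toRF N' = 0 := by
      ext i j
      rw [mul_apply_mulVec]
      have := hkerN j
      rw [LinearMap.mem_ker, Matrix.mulVecLin_apply] at this
      rw [this]
      simp
    have hAW' : toRF A * -(R * toRF N') = -(toRF B * toRF N') := by
      rw [hRdef, Matrix.mul_neg]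
      congr 1
      rw [← Matrix.mul_assoc, ← Matrix.mul_assoc, h2, Matrix.one_mul]
    have hCW' : toRF C * -(R * toRF N') = toRF D * toRF N' := by
      have h0 : (toRF D + toRF C * (toRF A)⁻¹ * toRF B) * toRF N' = 0 := by
        rw [← hG]; exact hGN
      rw [Matrix.add_mul] at h0
      have h1 : toRF C * (toRF A)⁻¹ * toRF B * toRF N' = -(toRF D * toRF N') :=
        eq_neg_of_add_eq_zero_right h0
      rw [hRdef, Matrix.mul_neg,
        show toRF C * ((toRF A)⁻¹ * toRF B * toRF N')
          = toRF C * (toRF A)⁻¹ * toRF B * toRF N' by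
            rw [← Matrix.mul_assoc, ← Matrix.mul_assoc], h1, neg_neg]
    have hK1RF : toRF ((Y * D - X * B) * N') = -(R * toRF N') := by
      calc toRF ((Y * D - X * B) * N')
          = toRF Y * (toRF D * toRF N') - toRF X * (toRF B * toRF N') := by
            rw [toRF_mul, toRF_sub, toRF_mul, toRF_mul, Matrix.sub_mul, Matrix.mul_assoc,
              Matrix.mul_assoc]
        _ = toRF X * (toRF A * -(R * toRF N')) + toRF Y * (toRF C * -(R * toRF N')) := by
            rw [hAW', hCW', Matrix.mul_neg]
            exact sub_eq_neg_add _ _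
        _ = (toRF X * toRF A + toRF Y * toRF C) * -(R * toRF N') := by
            rw [Matrix.add_mul]
            simp only [Matrix.mul_assoc]
        _ = -(R * toRF N') := by rw [hXY', Matrix.one_mul]
    have hcι' : ∀ j, (toRF (Matrix.fromRows ((Y * D - X * B) * N') N'))ᵀ j
        = ι ((toRF N')ᵀ j) := by
      intro j
      have hfirst : (toRF ((Y * D - X * B) * N'))ᵀ j = -(R *ᵥ (toRF N')ᵀ j) := by
        funext i
        calc (toRF ((Y * D - X * B) * N'))ᵀ j i = (-(R * toRF N')) i j := by rw [hK1RF]; rfl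
          _ = -((R *ᵥ (toRF N')ᵀ j) i) := by rw [Matrix.neg_apply, mul_apply_mulVec]
          _ = (-(R *ᵥ (toRF N')ᵀ j)) i := rfl
      rw [hcols, hι, hfirst]
    have hpbK : IsRightPolyBasis P (Matrix.fromRows ((Y * D - X * B) * N') N') := by
      constructor
      · have heq : (fun j => (toRF (Matrix.fromRows ((Y * D - X * B) * N') N'))ᵀ j)
            = ι ∘ (fun j => (toRF N')ᵀ j) := funext hcι'
        rw [heq]
        refine (hN'.1).map' ι (LinearMap.ker_eq_bot.mpr ?_)
        exact Function.LeftInverse.injective hπι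
      · have hr : (Set.range fun j => (toRF (Matrix.fromRows ((Y * D - X * B) * N') N'))ᵀ j)
            = ι '' (Set.range fun j => (toRF N')ᵀ j) := by
          rw [← Set.range_comp]
          exact congrArg _ (funext hcι')
        rw [hr, ← Submodule.map_span, hN'.2, hmap]
    have hdegK : ∀ j, colDegNat (Matrix.fromRows ((Y * D - X * B) * N') N') j = colDegNat N' j :=
      hdeg _ _ (by rw [hK1RF])
    exact ⟨(Y * D - X * B) * N', hpbK,
      Finset.sum_congr rfl fun j _ => hdegK j,
      Multiset.map_congr rfl fun j _ => hdegK j⟩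
  -- assemble everything
  obtain ⟨hH1RF, hbasis₂⟩ := hpart1 H₁ H₂ hmin.1
  have hdegH : ∀ j, colDegNat (Matrix.fromRows H₁ H₂) j = colDegNat H₂ j := hdeg H₁ H₂ hH1RF
  have hordH : matOrder (Matrix.fromRows H₁ H₂) = matOrder H₂ :=
    Finset.sum_congr rfl fun j _ => hdegH j
  have hcolDegsH : colDegs (Matrix.fromRows H₁ H₂) = colDegs H₂ :=
    Multiset.map_congr rfl fun j _ => hdegH j
  have hminG : IsRightMinimalBasis G H₂ := by
    refine ⟨hbasis₂, ?_⟩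
    intro l' N' hN'
    obtain ⟨K₁, hKpb, hKord, _⟩ := hpart2 N' hN'
    calc matOrder H₂ = matOrder (Matrix.fromRows H₁ H₂) := hordH.symm
      _ ≤ matOrder (Matrix.fromRows K₁ N') := hmin.2 _ _ hKpb
      _ = matOrder N' := hKord
  refine ⟨hminG, hH1RF, hcolDegsH, ?_⟩
  intro l' N' hN'min
  obtain ⟨K₁, hKpb, hKord, hKdegs⟩ := hpart2 N' hN'min.1
  refine ⟨K₁, ⟨hKpb, ?_⟩, hKdegs⟩
  intro l'' N'' hN''
  calc matOrder (Matrix.fromRows K₁ N') = matOrder N' := hKord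
    _ ≤ matOrder H₂ := hN'min.2 _ _ hbasis₂
    _ = matOrder (Matrix.fromRows H₁ H₂) := hordH.symm
    _ ≤ matOrder N'' := hmin.2 _ _ hN''

/-- Let `P = [[A,B],[-C,D]]` be a polynomial system matrix with transfer
function `G = D + C A⁻¹ B`.  If `A` and `C` are right coprime and `A⁻¹ B` is proper, and
`[H₁;H₂]` is a right minimal basis of `P`, then `H₂` is a right minimal basis of `G`,
`H₁ = -A⁻¹ B H₂`, and the right minimal indices of `P` and `G` coincide. -/
theorem rightMinimalBasis_transfer_of_rightMinimalBasis_psm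
    {n p m l : ℕ}
    (A : Matrix (Fin n) (Fin n) (Polynomial F))
    (B : Matrix (Fin n) (Fin m) (Polynomial F))
    (C : Matrix (Fin p) (Fin n) (Polynomial F))
    (D : Matrix (Fin p) (Fin m) (Polynomial F))
    (hA : A.det ≠ 0)
    (hcoprime : ∃ (X : Matrix (Fin n) (Fin n) (Polynomial F))
        (Y : Matrix (Fin n) (Fin p) (Polynomial F)), X * A + Y * C = 1)
    (hproper : ∀ i j, IsProperRat (((toRF A)⁻¹ * toRF B) i j))
    (G : Matrix (Fin p) (Fin m) (RatFunc F))
    (hG : G = toRF D + toRF C * (toRF A)⁻¹ * toRF B)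
    (P : Matrix (Fin n ⊕ Fin p) (Fin n ⊕ Fin m) (RatFunc F))
    (hP : P = toRF (Matrix.fromBlocks A B (-C) D))
    (H₁ : Matrix (Fin n) (Fin l) (Polynomial F))
    (H₂ : Matrix (Fin m) (Fin l) (Polynomial F))
    (hmin : IsRightMinimalBasis P (Matrix.fromRows H₁ H₂)) :
    IsRightMinimalBasis G H₂ ∧
    toRF H₁ = -((toRF A)⁻¹ * toRF B * toRF H₂) ∧
    (∀ s : Multiset ℕ, HasRightMinimalIndices P s ↔ HasRightMinimalIndices G s) := by
  obtain ⟨hminG, hH1, hcd, hpart2'⟩ :=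
    aux_main A B C D hA hcoprime hproper G hG P hP H₁ H₂ hmin
  refine ⟨hminG, hH1, ?_⟩
  intro s
  constructor
  · rintro ⟨l'', N'', hN''min, hN''degs⟩
    have hN'' : N'' = Matrix.fromRows N''.toRows₁ N''.toRows₂ := (Matrix.fromRows_toRows N'').symm
    rw [hN''] at hN''min
    obtain ⟨hminG'', _, hcd'', _⟩ :=
      aux_main A B C D hA hcoprime hproper G hG P hP _ _ hN''min
    exact ⟨l'', N''.toRows₂, hminG'', by rw [← hcd'', ← hN'', hN''degs]⟩
  · rintro ⟨l', N', hN'min, hN'degs⟩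
    obtain ⟨K₁, hKmin, hKdegs⟩ := hpart2' N' hN'min
    exact ⟨l', Matrix.fromRows K₁ N', hKmin, by rw [hKdegs, hN'degs]⟩

end
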